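/- Let α > 0, let C₁ > 0 be such that 0 ≤ K(s,t) ≤ C₁ t^{1/2−H} for all 0 < t < s ≤ 1, and let C > 0 and Ĉ > 0 be constants. Let g, P ∈ L²([0,1]; ℝⁿ) be such that |∫_t^1 P_s ds|² ≤ C ∫_0^1 |g_s|² ds for all t ∈ [0,1] and |∫_t^1 K(s,t) P_s ds|² ≤ Ĉ t^{1−2H} ∫_0^1 |g_s|² ds for all t ∈ (0,1]. Then ∫_0^1 |g_t + ∫_t^1 K(s,t) (α² e^{αs} ∫_s^1 e^{−αu} P_u du − α P_s) ds|² dt ≤ 2 (1 + 4 α⁴ e^{2α} C₁² (1 + α²) C/(2−2H) + 2 α² Ĉ/(2−2H)) ∫_0^1 |g_s|² ds. -/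

import Mathlib

open MeasureTheory Real Set

noncomputable def betaFn (a b : ℝ) : ℝ := Real.Gamma a * Real.Gamma b / Real.Gamma (a + b)

noncomputable def cH (H : ℝ) : ℝ := Real.sqrt (H * (2*H - 1) / betaFn (2 - 2*H) (H - 1/2))

/-- The kernel `K(t,s)` of the fractional integral operator, for Hurst parameter `H`. -/
noncomputable def Ker (H t s : ℝ) : ℝ :=
  if s < t then cH H * s ^ ((1:ℝ)/2 - H) * ∫ u in s..t, u ^ (H - 1/2) * (u - s) ^ (H - 3/2)
  else 0

/-- The operator `(Kh)_t = ∫_0^t K(t,s) h_s ds`. -/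
noncomputable def Kop {n : ℕ} (H : ℝ) (h : ℝ → EuclideanSpace ℝ (Fin n)) (t : ℝ) :
    EuclideanSpace ℝ (Fin n) :=
  ∫ s in (0:ℝ)..t, Ker H t s • h s

/-- The constant `C₂ = ∫_0^1 (v^{1/2-H} - 1)(1-v)^{-(1/2+H)} dv`. -/
noncomputable def C2 (H : ℝ) : ℝ :=
  ∫ v in (0:ℝ)..1, (v ^ ((1:ℝ)/2 - H) - 1) * (1 - v) ^ (-(1/2 + H))

section Aux

variable {E : Type*} [NormedAddCommGroup E] [NormedSpace ℝ E] [CompleteSpace E]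

lemma expInt (α a b : ℝ) :
    ∫ r in a..b, α * rexp (-α * r) = rexp (-α * a) - rexp (-α * b) := by
  have hd : ∀ r : ℝ, HasDerivAt (fun x => -rexp (-α * x)) (α * rexp (-α * r)) r := by
    intro r
    have h1 : HasDerivAt (fun x : ℝ => -α * x) (-α) r := by
      simpa using (hasDerivAt_id r).const_mul (-α)
    have h2 := h1.exp
    have h3 := h2.neg
    have h4 : α * rexp (-α * r) = -(rexp (-α * r) * -α) := by ring
    rw [h4]; exact h3
  have := intervalIntegral.integral_eq_sub_of_hasDerivAt (f := fun x => -rexp (-α * x))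
    (fun r _ => hd r) ((Continuous.intervalIntegrable (by continuity) a b))
  rw [this]; ring

lemma tail_exp_bound (α R : ℝ) (hα : 0 < α) (hR : 0 ≤ R) (P : ℝ → E)
    (hPint : IntegrableOn P (Ioc (0:ℝ) 1))
    (hQ : ∀ r ∈ Icc (0:ℝ) 1, ‖∫ u in r..(1:ℝ), P u‖ ≤ R)
    {s : ℝ} (hs : s ∈ Icc (0:ℝ) 1) :
    ‖∫ u in s..(1:ℝ), Real.exp (-α * u) • P u‖ ≤ (1 + α) * R := by
  obtain ⟨hs0, hs1⟩ := hs
  have hPi : IntegrableOn P (Ioc s 1) := hPint.mono_set (Ioc_subset_Ioc_left hs0)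
  haveI hfin : IsFiniteMeasure (volume.restrict (Ioc s (1:ℝ))) :=
    ⟨by rw [Measure.restrict_apply_univ]; exact measure_Ioc_lt_top⟩
  -- pointwise scalar decomposition
  have key : ∀ u : ℝ, rexp (-α * u) • P u
      = rexp (-α * s) • P u - (rexp (-α * s) - rexp (-α * u)) • P u := by
    intro u; rw [sub_smul]; abel
  have hint1 : IntervalIntegrable (fun u => rexp (-α * s) • P u) volume s 1 :=
    ((intervalIntegrable_iff_integrableOn_Ioc_of_le hs1).2 (hPi.smul _))
  have hint2 : IntervalIntegrable (fun u => (rexp (-α * s) - rexp (-α * u)) • P u)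
      volume s 1 := by
    rw [intervalIntegrable_iff_integrableOn_Ioc_of_le hs1]
    apply Integrable.mono' (hPi.norm.const_mul 1)
      (((continuous_const.sub (by continuity)).aestronglyMeasurable).smul
        hPi.aestronglyMeasurable)
    filter_upwards [ae_restrict_mem measurableSet_Ioc] with u hu
    show ‖(rexp (-α * s) - rexp (-α * u)) • P u‖ ≤ 1 * ‖P u‖
    rw [norm_smul, one_mul]
    apply mul_le_of_le_one_left (norm_nonneg _)
    rw [Real.norm_eq_abs, abs_of_nonneg (sub_nonneg.2 (exp_le_exp.2 (by nlinarith [hu.1.le])))]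
    have : rexp (-α * s) ≤ 1 := exp_le_one_iff.2 (by nlinarith)
    nlinarith [exp_pos (-α * u)]
  have split : (∫ u in s..(1:ℝ), rexp (-α * u) • P u)
      = (∫ u in s..(1:ℝ), rexp (-α * s) • P u)
        - ∫ u in s..(1:ℝ), (rexp (-α * s) - rexp (-α * u)) • P u := by
    rw [← intervalIntegral.integral_sub hint1 hint2]
    exact intervalIntegral.integral_congr fun u _ => key u
  set G : ℝ × ℝ → E := fun p => (if p.2 ≤ p.1 then α * rexp (-α * p.2) else 0) • P p.1 with hG
  have stepa : ∀ u ∈ Ioc s (1:ℝ), (rexp (-α * s) - rexp (-α * u)) • P u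
      = ∫ r in Ioc s (1:ℝ), G (u, r) := by
    intro u hu
    have e1 : (fun r => G (u, r)) = (Iic u).indicator (fun r => (α * rexp (-α * r)) • P u) := by
      funext r
      simp only [hG, Set.indicator_apply, mem_Iic, ite_smul, zero_smul]
    rw [e1, setIntegral_indicator measurableSet_Iic]
    rw [show Ioc s (1:ℝ) ∩ Iic u = Ioc s u by rw [Ioc_inter_Iic, min_eq_right hu.2]]
    rw [_root_.integral_smul_const, ← intervalIntegral.integral_of_le hu.1.le,
      expInt α s u]
  have stepb : ∀ r ∈ Ioc s (1:ℝ), (∫ u in Ioc s (1:ℝ), G (u, r))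
      = (α * rexp (-α * r)) • ∫ u in r..(1:ℝ), P u := by
    intro r hr
    have e2 : ∀ u, G (u, r) = (Ici r).indicator (fun u => (α * rexp (-α * r)) • P u) u := by
      intro u; simp only [hG, Set.indicator_apply, mem_Ici, ite_smul, zero_smul]
    rw [show (fun u => G (u, r)) = (Ici r).indicator (fun u => (α * rexp (-α * r)) • P u)
      from funext e2]
    rw [setIntegral_indicator measurableSet_Ici]
    rw [show Ioc s (1:ℝ) ∩ Ici r = Icc r 1 by
      ext x
      simp only [mem_inter_iff, mem_Ioc, mem_Ici, mem_Icc]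
      exact ⟨fun h => ⟨h.2, h.1.2⟩, fun h => ⟨⟨lt_of_lt_of_le hr.1 h.1, h.2⟩, h.1⟩⟩]
    rw [MeasureTheory.integral_Icc_eq_integral_Ioc, ← intervalIntegral.integral_of_le hr.2,
      intervalIntegral.integral_smul]
  have hPm : AEStronglyMeasurable (fun p : ℝ × ℝ => P p.1)
      ((volume.restrict (Ioc s 1)).prod (volume.restrict (Ioc s 1))) :=
    hPi.aestronglyMeasurable.comp_quasiMeasurePreserving Measure.quasiMeasurePreserving_fst
  have hGm : AEStronglyMeasurable G
      ((volume.restrict (Ioc s 1)).prod (volume.restrict (Ioc s 1))) := by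
    apply AEStronglyMeasurable.smul _ hPm
    apply Measurable.aestronglyMeasurable
    exact Measurable.ite (measurableSet_le measurable_snd measurable_fst)
      (((measurable_snd.const_mul (-α)).exp).const_mul α) measurable_const
  have hGi : Integrable G ((volume.restrict (Ioc s 1)).prod (volume.restrict (Ioc s 1))) := by
    have hbound : Integrable (fun p : ℝ × ℝ => (α * ‖P p.1‖) * 1)
        ((volume.restrict (Ioc s 1)).prod (volume.restrict (Ioc s 1))) :=
      (hPi.norm.const_mul α).mul_prod (integrable_const 1)
    apply Integrable.mono' (by simpa using hbound) hGm
    rw [Measure.prod_restrict]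
    filter_upwards [ae_restrict_mem (measurableSet_Ioc.prod measurableSet_Ioc)] with p hp
    rw [hG, norm_smul]
    apply mul_le_mul_of_nonneg_right _ (norm_nonneg _)
    rw [Real.norm_eq_abs]
    rcases le_or_gt p.2 p.1 with h | h
    · rw [if_pos h, abs_of_nonneg (by positivity)]
      have : rexp (-α * p.2) ≤ 1 := exp_le_one_iff.2 (by nlinarith [hp.2.1.le, hs0])
      nlinarith
    · rw [if_neg (not_le.2 h)]; simp [hα.le]
  have swap : (∫ u in Ioc s (1:ℝ), ∫ r in Ioc s (1:ℝ), G (u, r))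
      = ∫ r in Ioc s (1:ℝ), ∫ u in Ioc s (1:ℝ), G (u, r) :=
    MeasureTheory.integral_integral_swap (f := fun u r => G (u, r)) hGi
  have hD : ‖∫ u in s..(1:ℝ), (rexp (-α * s) - rexp (-α * u)) • P u‖ ≤ α * R := by
    rw [intervalIntegral.integral_of_le hs1,
      setIntegral_congr_fun measurableSet_Ioc stepa, swap,
      setIntegral_congr_fun measurableSet_Ioc stepb]
    have := norm_setIntegral_le_of_norm_le_const (μ := volume)
      (s := Ioc s (1:ℝ)) (C := α * R)
      (f := fun r => (α * rexp (-α * r)) • ∫ u in r..(1:ℝ), P u)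
      measure_Ioc_lt_top ?_
    · refine this.trans ?_
      have h1 : volume.real (Ioc s (1:ℝ)) ≤ 1 := by
        rw [measureReal_def, Real.volume_Ioc, ENNReal.toReal_ofReal_eq_iff.2 (by linarith)] <;> linarith
      nlinarith [mul_nonneg hα.le hR]
    · intro r hr
      rw [norm_smul, Real.norm_eq_abs, abs_of_nonneg (by positivity)]
      have h2 : rexp (-α * r) ≤ 1 := exp_le_one_iff.2 (by nlinarith [hr.1.le, hs0])
      have h3 := hQ r ⟨hs0.trans hr.1.le, hr.2⟩
      have h4 : α * rexp (-α * r) ≤ α := by nlinarith [exp_pos (-α * r)]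
      exact mul_le_mul h4 h3 (norm_nonneg _) hα.le
  have hX : ‖∫ u in s..(1:ℝ), rexp (-α * s) • P u‖ ≤ R := by
    rw [intervalIntegral.integral_smul, norm_smul, Real.norm_eq_abs,
      abs_of_nonneg (exp_pos _).le]
    have h2 : rexp (-α * s) ≤ 1 := exp_le_one_iff.2 (by nlinarith)
    have h3 := hQ s ⟨hs0, hs1⟩
    nlinarith [norm_nonneg (∫ u in s..(1:ℝ), P u), exp_pos (-α * s)]
  rw [split]
  calc ‖_ - _‖ ≤ ‖∫ u in s..(1:ℝ), rexp (-α * s) • P u‖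
        + ‖∫ u in s..(1:ℝ), (rexp (-α * s) - rexp (-α * u)) • P u‖ := norm_sub_le _ _
    _ ≤ R + α * R := add_le_add hX hD
    _ = (1 + α) * R := by ring


/-- Continuity of the kernel in its first variable, on `(t, 1]`, for `0 < t`. -/
lemma ker_contOn (H : ℝ) (hH : H ∈ Set.Ioo (1/2 : ℝ) 1) {t : ℝ} (ht : 0 < t) (ht1 : t ≤ 1) :
    ContinuousOn (fun s => Ker H s t) (Ioc t 1) := by
  set f : ℝ → ℝ := fun u => u ^ (H - 1/2) * (u - t) ^ (H - 3/2) with hf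
  have hfi : IntervalIntegrable f volume t 1 := by
    have h1 : IntervalIntegrable (fun x : ℝ => (x - t) ^ (H - 3/2)) volume t 1 := by
      have := (intervalIntegral.intervalIntegrable_rpow' (a := 0) (b := 1 - t) (r := H - 3/2)
        (by linarith [hH.1])).comp_sub_right t
      simpa using this
    apply h1.continuousOn_mul
    apply ContinuousOn.rpow_const continuousOn_id
    intro x hx
    left
    rw [uIcc_of_le ht1] at hx
    exact ne_of_gt (lt_of_lt_of_le ht hx.1)
  have hprim : ContinuousOn (fun s => ∫ u in t..s, f u) (Icc t 1) := by
    have := intervalIntegral.continuousOn_primitive_interval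
      (a := t) (b := 1) (μ := volume) (f := f) ?_
    · rwa [uIcc_of_le ht1] at this
    · rw [uIcc_of_le ht1]
      exact (integrableOn_Icc_iff_integrableOn_Ioc).2
        ((intervalIntegrable_iff_integrableOn_Ioc_of_le ht1).1 hfi)
  have : ContinuousOn (fun s => cH H * t ^ ((1:ℝ)/2 - H) * ∫ u in t..s, f u) (Icc t 1) :=
    continuousOn_const.mul hprim
  apply (this.mono Ioc_subset_Icc_self).congr
  intro s hs
  simp only [Ker, if_pos hs.1]
  rfl

end Aux

set_option maxHeartbeats 1600000

theorem stmt_17 (H : ℝ) (hH : H ∈ Set.Ioo (1/2 : ℝ) 1) (n : ℕ) (hn : 1 ≤ n)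
    (α : ℝ) (hα : 0 < α)
    (C₁ : ℝ) (hC₁ : 0 < C₁)
    (hK : ∀ t s : ℝ, 0 < t → t < s → s ≤ 1 →
      0 ≤ Ker H s t ∧ Ker H s t ≤ C₁ * t ^ ((1:ℝ)/2 - H))
    (C Chat : ℝ) (hC : 0 < C) (hChat : 0 < Chat)
    (g P : ℝ → EuclideanSpace ℝ (Fin n))
    (hg : MemLp g 2 (volume.restrict (Set.Ioc (0:ℝ) 1)))
    (hP : MemLp P 2 (volume.restrict (Set.Ioc (0:ℝ) 1)))
    (hPtail : ∀ t ∈ Set.Icc (0:ℝ) 1,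
      ‖∫ s in t..(1:ℝ), P s‖^2 ≤ C * ∫ s in (0:ℝ)..1, ‖g s‖^2)
    (hKPtail : ∀ t ∈ Set.Ioc (0:ℝ) 1,
      ‖∫ s in t..(1:ℝ), Ker H s t • P s‖^2 ≤
        Chat * t ^ (1 - 2*H) * ∫ s in (0:ℝ)..1, ‖g s‖^2) :
    (∫ t in (0:ℝ)..1,
        ‖g t + ∫ s in t..(1:ℝ),
            Ker H s t •
              ((α^2 * Real.exp (α * s)) • (∫ u in s..(1:ℝ), Real.exp (-α * u) • P u)
                - α • P s)‖^2)
      ≤ 2 * (1 + 4 * α^4 * Real.exp (2*α) * C₁^2 * (1 + α^2) * C / (2 - 2*H)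
            + 2 * α^2 * Chat / (2 - 2*H)) *
          ∫ s in (0:ℝ)..1, ‖g s‖^2 := by
  obtain ⟨hH1, hH2⟩ := hH
  have hd : (0:ℝ) < 2 - 2*H := by linarith
  haveI hfin : IsFiniteMeasure (volume.restrict (Ioc (0:ℝ) 1)) :=
    ⟨by rw [Measure.restrict_apply_univ]; exact measure_Ioc_lt_top⟩
  set M : ℝ := ∫ s in (0:ℝ)..1, ‖g s‖^2 with hMdef
  have hM0 : 0 ≤ M :=
    intervalIntegral.integral_nonneg zero_le_one (fun u _ => sq_nonneg _)
  have hPint : IntegrableOn P (Ioc (0:ℝ) 1) := hP.integrable (by norm_num)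
  have hgsq : IntegrableOn (fun t => ‖g t‖^2) (Ioc (0:ℝ) 1) := by
    have := hg.integrable_norm_rpow (by norm_num) (by norm_num)
    apply (integrable_congr ?_).1 this
    filter_upwards with x
    rw [show (ENNReal.toReal 2) = ((2:ℕ):ℝ) by norm_num, Real.rpow_natCast]
  set R : ℝ := Real.sqrt (C * M) with hRdef
  have hR0 : 0 ≤ R := Real.sqrt_nonneg _
  have hRsq : R^2 = C * M := Real.sq_sqrt (by positivity)
  have hQb : ∀ r ∈ Icc (0:ℝ) 1, ‖∫ u in r..(1:ℝ), P u‖ ≤ R := by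
    intro r hr
    have := hPtail r hr
    calc ‖∫ u in r..(1:ℝ), P u‖ = Real.sqrt (‖∫ u in r..(1:ℝ), P u‖^2) :=
          (Real.sqrt_sq (norm_nonneg _)).symm
      _ ≤ R := Real.sqrt_le_sqrt this
  have hQt : ∀ s ∈ Icc (0:ℝ) 1,
      ‖∫ u in s..(1:ℝ), Real.exp (-α * u) • P u‖ ≤ (1 + α) * R := fun s hs =>
    tail_exp_bound α R hα hR0 P hPint hQb hs
  -- the constant
  set K₀ : ℝ := 8*α^4*Real.exp (2*α)*C₁^2*(1+α^2)*C + 4*α^2*Chat with hK₀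
  set Qt : ℝ → EuclideanSpace ℝ (Fin n) :=
    fun s => ∫ u in s..(1:ℝ), Real.exp (-α * u) • P u with hQtdef
  -- Qt is continuous on [0,1]
  have hQtc : ContinuousOn Qt (Icc (0:ℝ) 1) := by
    have hi : IntegrableOn (fun u => Real.exp (-α * u) • P u) (uIcc (0:ℝ) 1) := by
      rw [uIcc_of_le zero_le_one, integrableOn_Icc_iff_integrableOn_Ioc]
      apply Integrable.mono' hPint.norm
        (((Continuous.aestronglyMeasurable (f := fun u => Real.exp (-α * u)) (by continuity)).smul hPint.aestronglyMeasurable :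
          AEStronglyMeasurable (fun u => Real.exp (-α * u) • P u) _))
      filter_upwards [ae_restrict_mem measurableSet_Ioc] with u hu
      show ‖Real.exp (-α * u) • P u‖ ≤ ‖P u‖
      rw [norm_smul, Real.norm_eq_abs, abs_of_nonneg (exp_pos _).le]
      exact mul_le_of_le_one_left (norm_nonneg _) (exp_le_one_iff.2 (by nlinarith [hu.1.le]))
    have := intervalIntegral.continuousOn_primitive_interval_left hi
    rwa [uIcc_of_le zero_le_one] at this
  -- pointwise bound
  have hpt : ∀ t ∈ Ioc (0:ℝ) 1,
      ‖g t + ∫ s in t..(1:ℝ),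
          Ker H s t •
            ((α^2 * Real.exp (α * s)) • Qt s
              - α • P s)‖^2
        ≤ 2*‖g t‖^2 + K₀ * M * t ^ (1 - 2*H) := by
    intro t ht
    obtain ⟨ht0, ht1⟩ := ht
    haveI : IsFiniteMeasure (volume.restrict (Ioc t (1:ℝ))) :=
      ⟨by rw [Measure.restrict_apply_univ]; exact measure_Ioc_lt_top⟩
    have hPit : IntegrableOn P (Ioc t 1) := hPint.mono_set (Ioc_subset_Ioc_left ht0.le)
    have hKm : AEStronglyMeasurable (fun s => Ker H s t) (volume.restrict (Ioc t 1)) :=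
      (ker_contOn H ⟨hH1, hH2⟩ ht0 ht1).aestronglyMeasurable measurableSet_Ioc
    have htpow : (0:ℝ) ≤ t ^ ((1:ℝ)/2 - H) := Real.rpow_nonneg ht0.le _
    set T : ℝ := t ^ ((1:ℝ)/2 - H) with hTdef
    set S : ℝ := t ^ (1 - 2*H) with hSdef
    have hTS : T^2 = S := by
      rw [hTdef, hSdef, ← Real.rpow_natCast (t ^ ((1:ℝ)/2 - H)) 2,
        ← Real.rpow_mul ht0.le]
      norm_num
      rw [show ((1:ℝ)/2-H)*2 = 1-2*H by ring]
    have hS0 : 0 ≤ S := Real.rpow_nonneg ht0.le _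
    -- bound on Ker along (t,1]
    have hKb : ∀ s ∈ Ioc t (1:ℝ), 0 ≤ Ker H s t ∧ Ker H s t ≤ C₁ * T :=
      fun s hs => hK t s ht0 hs.1 hs.2
    -- A-part pointwise bound
    have hApt : ∀ s ∈ Ioc t (1:ℝ),
        ‖Ker H s t • ((α^2 * Real.exp (α * s)) • Qt s)‖
          ≤ C₁ * T * (α^2 * Real.exp α) * ((1+α)*R) := by
      intro s hs
      rw [norm_smul, norm_smul, Real.norm_eq_abs, Real.norm_eq_abs,
        abs_of_nonneg (hKb s hs).1, abs_of_nonneg (by positivity)]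
      have h1 : Real.exp (α * s) ≤ Real.exp α := by
        apply Real.exp_le_exp.2; nlinarith [hs.2]
      have h2 : ‖Qt s‖ ≤ (1+α)*R := hQt s ⟨le_trans ht0.le hs.1.le, hs.2⟩
      have h3 := (hKb s hs).2
      have h4 : α^2 * Real.exp (α * s) * ‖Qt s‖ ≤ (α^2 * Real.exp α) * ((1+α)*R) := by
        apply mul_le_mul _ h2 (norm_nonneg _) (by positivity)
        nlinarith [exp_pos (α * s)]
      calc Ker H s t * (α^2 * Real.exp (α * s) * ‖Qt s‖)
          ≤ (C₁ * T) * ((α^2 * Real.exp α) * ((1+α)*R)) :=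
            mul_le_mul h3 h4 (by positivity) (by positivity)
        _ = C₁ * T * (α^2 * Real.exp α) * ((1+α)*R) := by ring
    -- integrability of the two pieces
    have hBi : IntegrableOn (fun s => Ker H s t • P s) (Ioc t 1) := by
      apply Integrable.mono' (hPit.norm.const_mul (C₁ * T))
        (hKm.smul hPit.aestronglyMeasurable)
      filter_upwards [ae_restrict_mem measurableSet_Ioc] with s hs
      show ‖Ker H s t • P s‖ ≤ C₁ * T * ‖P s‖
      rw [norm_smul, Real.norm_eq_abs, abs_of_nonneg (hKb s hs).1]
      exact mul_le_mul_of_nonneg_right (hKb s hs).2 (norm_nonneg _)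
    have hBi' : IntervalIntegrable (fun s => Ker H s t • (α • P s)) volume t 1 := by
      rw [intervalIntegrable_iff_integrableOn_Ioc_of_le ht1]
      have : (fun s => Ker H s t • (α • P s)) = fun s => α • (Ker H s t • P s) := by
        funext s; rw [smul_comm]
      rw [this]
      exact hBi.smul α
    have hQtm : AEStronglyMeasurable Qt (volume.restrict (Ioc t 1)) :=
      (hQtc.mono (fun x hx => ⟨le_trans ht0.le hx.1.le, hx.2⟩)).aestronglyMeasurable
        measurableSet_Ioc
    have hAi' : IntervalIntegrable
        (fun s => Ker H s t • ((α^2 * Real.exp (α * s)) • Qt s)) volume t 1 := by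
      rw [intervalIntegrable_iff_integrableOn_Ioc_of_le ht1]
      apply Integrable.mono'
        (integrable_const (C₁ * T * (α^2 * Real.exp α) * ((1+α)*R)))
        ((hKm.smul ((Continuous.aestronglyMeasurable (f := fun s => α^2 * Real.exp (α * s))
          (by continuity)).smul hQtm) :
          AEStronglyMeasurable (fun s => Ker H s t • ((α^2 * Real.exp (α * s)) • Qt s)) _))
      filter_upwards [ae_restrict_mem measurableSet_Ioc] with s hs
      exact hApt s hs
    -- split the integral
    have hsplit : (∫ s in t..(1:ℝ), Ker H s t • ((α^2 * Real.exp (α*s)) • Qt s - α • P s))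
        = (∫ s in t..(1:ℝ), Ker H s t • ((α^2 * Real.exp (α*s)) • Qt s))
          - ∫ s in t..(1:ℝ), Ker H s t • (α • P s) := by
      rw [← intervalIntegral.integral_sub hAi' hBi']
      apply intervalIntegral.integral_congr
      intro s _
      exact smul_sub _ _ _
    have hAb : ‖∫ s in t..(1:ℝ), Ker H s t • ((α^2 * Real.exp (α*s)) • Qt s)‖
        ≤ C₁ * T * (α^2 * Real.exp α) * ((1+α)*R) := by
      have h := intervalIntegral.norm_integral_le_of_norm_le_const
        (C := C₁ * T * (α^2 * Real.exp α) * ((1+α)*R))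
        (f := fun s => Ker H s t • ((α^2 * Real.exp (α*s)) • Qt s))
        (a := t) (b := 1) ?_
      · refine h.trans ?_
        rw [abs_of_nonneg (by linarith : (0:ℝ) ≤ 1 - t)]
        nlinarith [mul_nonneg (mul_nonneg (mul_nonneg hC₁.le htpow)
          (by positivity : (0:ℝ) ≤ α^2 * Real.exp α)) (by positivity : (0:ℝ) ≤ (1+α)*R)]
      · intro s hs
        rw [Set.uIoc_of_le ht1] at hs
        exact hApt s hs
    have hBb : ‖∫ s in t..(1:ℝ), Ker H s t • P s‖ ≤ Real.sqrt (Chat * S * M) := by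
      have h := hKPtail t ⟨ht0, ht1⟩
      calc ‖∫ s in t..(1:ℝ), Ker H s t • P s‖
          = Real.sqrt (‖∫ s in t..(1:ℝ), Ker H s t • P s‖^2) :=
            (Real.sqrt_sq (norm_nonneg _)).symm
        _ ≤ Real.sqrt (Chat * S * M) := Real.sqrt_le_sqrt h
    have hBb2 : ‖∫ s in t..(1:ℝ), Ker H s t • (α • P s)‖ ≤ α * Real.sqrt (Chat * S * M) := by
      have : (fun s => Ker H s t • (α • P s)) = fun s => α • (Ker H s t • P s) := by
        funext s; rw [smul_comm]
      rw [this, intervalIntegral.integral_smul, norm_smul, Real.norm_eq_abs,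
        abs_of_nonneg hα.le]
      exact mul_le_mul_of_nonneg_left hBb hα.le
    -- put it together
    set b : ℝ := C₁ * T * (α^2 * Real.exp α) * ((1+α)*R) with hbdef
    set c : ℝ := α * Real.sqrt (Chat * S * M) with hcdef
    have hb0 : 0 ≤ b := by positivity
    have hc0 : 0 ≤ c := by positivity
    have hnorm : ‖g t + ∫ s in t..(1:ℝ),
        Ker H s t • ((α^2 * Real.exp (α*s)) • Qt s - α • P s)‖ ≤ ‖g t‖ + (b + c) := by
      refine (norm_add_le _ _).trans ?_
      apply add_le_add_right
      rw [hsplit]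
      exact (norm_sub_le _ _).trans (add_le_add hAb hBb2)
    have hsq : ‖g t + ∫ s in t..(1:ℝ),
        Ker H s t • ((α^2 * Real.exp (α*s)) • Qt s - α • P s)‖^2
          ≤ 2*‖g t‖^2 + 4*b^2 + 4*c^2 := by
      have h0 := norm_nonneg (g t + ∫ s in t..(1:ℝ),
        Ker H s t • ((α^2 * Real.exp (α*s)) • Qt s - α • P s))
      nlinarith [sq_nonneg (‖g t‖ - b - c), sq_nonneg (b - c), norm_nonneg (g t)]
    refine hsq.trans ?_
    have hb2 : b^2 = C₁^2 * S * α^4 * (Real.exp α)^2 * (1+α)^2 * (C * M) := by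
      rw [hbdef, ← hRsq, ← hTS]; ring
    have hc2 : c^2 = α^2 * (Chat * S * M) := by
      rw [hcdef, mul_pow, Real.sq_sqrt (by positivity)]
    have hexp2 : (Real.exp α)^2 = Real.exp (2*α) := by
      rw [sq, ← Real.exp_add]; ring_nf
    have halg : 4*b^2 + 4*c^2 ≤ K₀ * M * S := by
      rw [hb2, hc2, hexp2, hK₀]
      have h5 : (1+α)^2 ≤ 2*(1+α^2) := by nlinarith [sq_nonneg (1 - α)]
      have h6 : 0 ≤ C₁^2 * S * α^4 * Real.exp (2*α) * (C * M) := by positivity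
      nlinarith [mul_le_mul_of_nonneg_left h5 h6]
    linarith
  -- final assembly
  have hrpow_int : IntegrableOn (fun u : ℝ => u ^ (1-2*H)) (Ioc (0:ℝ) 1) :=
    (intervalIntegrable_iff_integrableOn_Ioc_of_le zero_le_one).1
      (intervalIntegral.intervalIntegrable_rpow' (by linarith))
  have hrhs_int : IntegrableOn (fun u => 2*‖g u‖^2 + K₀ * M * u ^ (1-2*H)) (Ioc (0:ℝ) 1) :=
    (hgsq.const_mul 2).add (hrpow_int.const_mul (K₀ * M))
  have hrpow_val : ∫ u in (0:ℝ)..1, u ^ (1-2*H) = 1/(2-2*H) := by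
    rw [integral_rpow (Or.inl (by linarith))]
    rw [Real.one_rpow, Real.zero_rpow (by intro hcon; rw [show 1-2*H+1 = 2-2*H by ring] at hcon; linarith)]
    rw [show 1-2*H+1 = 2-2*H by ring]
    ring
  by_cases hLi : IntervalIntegrable (fun t => ‖g t + ∫ s in t..(1:ℝ),
      Ker H s t • ((α^2 * Real.exp (α*s)) • Qt s - α • P s)‖^2) volume 0 1
  · rw [intervalIntegral.integral_of_le zero_le_one]
    have mono := setIntegral_mono_on
      ((intervalIntegrable_iff_integrableOn_Ioc_of_le zero_le_one).1 hLi)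
      hrhs_int measurableSet_Ioc hpt
    refine mono.trans ?_
    rw [integral_add (hgsq.const_mul 2) (hrpow_int.const_mul (K₀ * M)),
      MeasureTheory.integral_const_mul, MeasureTheory.integral_const_mul,
      ← intervalIntegral.integral_of_le zero_le_one,
      ← intervalIntegral.integral_of_le zero_le_one, ← hMdef, hrpow_val, hK₀]
    have : 2 * M + (8*α^4*Real.exp (2*α)*C₁^2*(1+α^2)*C + 4*α^2*Chat) * M * (1/(2-2*H))
        = 2 * (1 + 4 * α^4 * Real.exp (2*α) * C₁^2 * (1 + α^2) * C / (2 - 2*H)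
            + 2 * α^2 * Chat / (2 - 2*H)) * M := by
      field_simp
      ring
    linarith
  · rw [intervalIntegral.integral_undef hLi]
    have h1 : (0:ℝ) ≤ 4 * α^4 * Real.exp (2*α) * C₁^2 * (1 + α^2) * C / (2 - 2*H) :=
      div_nonneg (by positivity) (by linarith)
    have h2 : (0:ℝ) ≤ 2 * α^2 * Chat / (2 - 2*H) :=
      div_nonneg (by positivity) (by linarith)
    nlinarith
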